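/- Let Y be a mean zero log-concave random variable and t > 0 with P(|Y| ≥ t) ≤ p for some p > 0. Then P(|Y| ≥ t/2) ≥ (1/√(e·p))·P(|Y| ≥ t). -/

import Mathlib

open MeasureTheory Finset Pointwise

noncomputable def maxKSum {n : ℕ} (k : ℕ) (x : Fin n → ℝ) : ℝ :=
  sSup {y | ∃ I : Finset (Fin n), I.card = k ∧ y = ∑ i ∈ I, |x i|}

noncomputable def kthMax {n : ℕ} (k : ℕ) (x : Fin n → ℝ) : ℝ :=
  sSup {t : ℝ | k ≤ (Finset.univ.filter (fun i => t ≤ |x i|)).card}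

noncomputable def tk {Ω : Type*} [MeasurableSpace Ω] (μ : Measure Ω) {n : ℕ}
    (X : Fin n → Ω → ℝ) (k : ℝ) : ℝ :=
  sInf {t : ℝ | 0 < t ∧ ∑ i, ∫ ω in {ω | t ≤ |X i ω|}, |X i ω| ∂μ ≤ k * t}

noncomputable def tstar {Ω : Type*} [MeasurableSpace Ω] (μ : Measure Ω) {n : ℕ}
    (X : Fin n → Ω → ℝ) (p : ℝ) : ℝ :=
  sInf {t : ℝ | 0 < t ∧ ∑ i, (μ {ω | t ≤ |X i ω|}).toReal ≤ p}

def IsLogConcave {E : Type*} [AddCommGroup E] [Module ℝ E] [TopologicalSpace E]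
    [MeasurableSpace E] (ν : Measure E) : Prop :=
  ∀ (K L : Set E) (l : ℝ), IsCompact K → IsCompact L → K.Nonempty → L.Nonempty →
    l ∈ Set.Icc (0 : ℝ) 1 → ν K ^ l * ν L ^ (1 - l) ≤ ν (l • K + (1 - l) • L)

noncomputable def med {Ω : Type*} [MeasurableSpace Ω] (μ : Measure Ω) (f : Ω → ℝ) : ℝ :=
  sInf {t : ℝ | (1 : ℝ) / 2 ≤ (μ {ω | f ω ≤ t}).toReal}

noncomputable def kthMaxOn {n : ℕ} (J : Finset (Fin n)) (k : ℕ) (x : Fin n → ℝ) : ℝ :=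
  sSup {t : ℝ | k ≤ (J.filter (fun i => t ≤ |x i|)).card}

section Helpers

open Set Filter

lemma aux_tendsto_Ici (ν : Measure ℝ) (x c : ℝ) (hc : x ≤ c) :
    Tendsto (fun n : ℕ => ν (Icc x (c + n))) atTop (nhds (ν (Ici x))) := by
  have hU : (⋃ n : ℕ, Icc x (c + n)) = Ici x := by
    ext z
    simp only [Set.mem_iUnion, Set.mem_Icc, Set.mem_Ici]
    constructor
    · rintro ⟨n, h1, _⟩; exact h1
    · intro hz
      refine ⟨⌈z - c⌉₊, hz, ?_⟩
      have := Nat.le_ceil (z - c)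
      linarith
  have hmono : Monotone fun n : ℕ => Icc x (c + n) := by
    intro m n hmn
    apply Set.Icc_subset_Icc le_rfl
    have : (m : ℝ) ≤ n := Nat.cast_le.mpr hmn
    linarith
  simpa [hU, Function.comp_def] using tendsto_measure_iUnion_atTop (μ := ν) hmono

lemma aux_tendsto_Iic (ν : Measure ℝ) (x c : ℝ) (hc : c ≤ x) :
    Tendsto (fun n : ℕ => ν (Icc (c - n) x)) atTop (nhds (ν (Iic x))) := by
  have hU : (⋃ n : ℕ, Icc (c - n) x) = Iic x := by
    ext z
    simp only [Set.mem_iUnion, Set.mem_Icc, Set.mem_Iic]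
    constructor
    · rintro ⟨n, _, h2⟩; exact h2
    · intro hz
      refine ⟨⌈c - z⌉₊, ?_, hz⟩
      have := Nat.le_ceil (c - z)
      linarith
  have hmono : Monotone fun n : ℕ => Icc (c - n) x := by
    intro m n hmn
    apply Set.Icc_subset_Icc _ le_rfl
    have : (m : ℝ) ≤ n := Nat.cast_le.mpr hmn
    linarith
  simpa [hU, Function.comp_def] using tendsto_measure_iUnion_atTop (μ := ν) hmono

lemma tail_lc_Ici (ν : Measure ℝ) [IsProbabilityMeasure ν] (hlc : IsLogConcave ν)
    (x y l : ℝ) (hl0 : 0 ≤ l) (hl1 : l ≤ 1) :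
    ν (Ici x) ^ l * ν (Ici y) ^ (1 - l) ≤ ν (Ici (l * x + (1 - l) * y)) := by
  set c := max x y with hc
  set m := l * x + (1 - l) * y with hm
  have key : ∀ n : ℕ, ν (Icc x (c + n)) ^ l * ν (Icc y (c + n)) ^ (1 - l) ≤ ν (Ici m) := by
    intro n
    have hxc : x ≤ c + n := by
      have : x ≤ c := le_max_left _ _
      have : (0:ℝ) ≤ n := Nat.cast_nonneg n
      linarith [le_max_left x y]
    have hyc : y ≤ c + n := by
      have : (0:ℝ) ≤ n := Nat.cast_nonneg n
      linarith [le_max_right x y]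
    have h := hlc (Icc x (c + n)) (Icc y (c + n)) l isCompact_Icc isCompact_Icc
      (Set.nonempty_Icc.mpr hxc) (Set.nonempty_Icc.mpr hyc) ⟨hl0, hl1⟩
    refine h.trans (measure_mono ?_)
    intro z hz
    rw [Set.mem_add] at hz
    obtain ⟨u, hu, v, hv, rfl⟩ := hz
    rw [Set.mem_smul_set] at hu hv
    obtain ⟨a, ha, rfl⟩ := hu
    obtain ⟨b, hb, rfl⟩ := hv
    simp only [smul_eq_mul, Set.mem_Ici, hm]
    have h1 : l * x ≤ l * a := mul_le_mul_of_nonneg_left ha.1 hl0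
    have h2 : (1 - l) * y ≤ (1 - l) * b := mul_le_mul_of_nonneg_left hb.1 (by linarith)
    linarith
  have hx := aux_tendsto_Ici ν x c (le_max_left _ _)
  have hy := aux_tendsto_Ici ν y c (le_max_right _ _)
  have hfin1 : ν (Ici x) ^ l ≠ ⊤ := ENNReal.rpow_ne_top_of_nonneg hl0 (measure_ne_top _ _)
  have hfin2 : ν (Ici y) ^ (1 - l) ≠ ⊤ :=
    ENNReal.rpow_ne_top_of_nonneg (by linarith) (measure_ne_top _ _)
  have htend : Tendsto (fun n : ℕ => ν (Icc x (c + n)) ^ l * ν (Icc y (c + n)) ^ (1 - l))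
      atTop (nhds (ν (Ici x) ^ l * ν (Ici y) ^ (1 - l))) := by
    exact ENNReal.Tendsto.mul ((ENNReal.continuous_rpow_const.tendsto _).comp hx)
      (Or.inr hfin2) ((ENNReal.continuous_rpow_const.tendsto _).comp hy) (Or.inr hfin1)
  exact le_of_tendsto htend (Eventually.of_forall key)

lemma tail_lc_Iic (ν : Measure ℝ) [IsProbabilityMeasure ν] (hlc : IsLogConcave ν)
    (x y l : ℝ) (hl0 : 0 ≤ l) (hl1 : l ≤ 1) :
    ν (Iic x) ^ l * ν (Iic y) ^ (1 - l) ≤ ν (Iic (l * x + (1 - l) * y)) := by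
  set c := min x y with hc
  set m := l * x + (1 - l) * y with hm
  have key : ∀ n : ℕ, ν (Icc (c - n) x) ^ l * ν (Icc (c - n) y) ^ (1 - l) ≤ ν (Iic m) := by
    intro n
    have hxc : c - n ≤ x := by
      have : (0:ℝ) ≤ n := Nat.cast_nonneg n
      linarith [min_le_left x y]
    have hyc : c - n ≤ y := by
      have : (0:ℝ) ≤ n := Nat.cast_nonneg n
      linarith [min_le_right x y]
    have h := hlc (Icc (c - n) x) (Icc (c - n) y) l isCompact_Icc isCompact_Icc
      (Set.nonempty_Icc.mpr hxc) (Set.nonempty_Icc.mpr hyc) ⟨hl0, hl1⟩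
    refine h.trans (measure_mono ?_)
    intro z hz
    rw [Set.mem_add] at hz
    obtain ⟨u, hu, v, hv, rfl⟩ := hz
    rw [Set.mem_smul_set] at hu hv
    obtain ⟨a, ha, rfl⟩ := hu
    obtain ⟨b, hb, rfl⟩ := hv
    simp only [smul_eq_mul, Set.mem_Iic, hm]
    have h1 : l * a ≤ l * x := mul_le_mul_of_nonneg_left ha.2 hl0
    have h2 : (1 - l) * b ≤ (1 - l) * y := mul_le_mul_of_nonneg_left hb.2 (by linarith)
    linarith
  have hx := aux_tendsto_Iic ν x c (min_le_left _ _)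
  have hy := aux_tendsto_Iic ν y c (min_le_right _ _)
  have hfin1 : ν (Iic x) ^ l ≠ ⊤ := ENNReal.rpow_ne_top_of_nonneg hl0 (measure_ne_top _ _)
  have hfin2 : ν (Iic y) ^ (1 - l) ≠ ⊤ :=
    ENNReal.rpow_ne_top_of_nonneg (by linarith) (measure_ne_top _ _)
  have htend : Tendsto (fun n : ℕ => ν (Icc (c - n) x) ^ l * ν (Icc (c - n) y) ^ (1 - l))
      atTop (nhds (ν (Iic x) ^ l * ν (Iic y) ^ (1 - l))) := by
    exact ENNReal.Tendsto.mul ((ENNReal.continuous_rpow_const.tendsto _).comp hx)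
      (Or.inr hfin2) ((ENNReal.continuous_rpow_const.tendsto _).comp hy) (Or.inr hfin1)
  exact le_of_tendsto htend (Eventually.of_forall key)

variable {Ω : Type*} [MeasurableSpace Ω] (μ : Measure Ω) [IsProbabilityMeasure μ]

lemma tail_lc_real {Y : Ω → ℝ} (hmeas : Measurable Y) (hlc : IsLogConcave (μ.map Y))
    (x y l : ℝ) (hl0 : 0 ≤ l) (hl1 : l ≤ 1) :
    (μ {ω | x ≤ Y ω}).toReal ^ l * (μ {ω | y ≤ Y ω}).toReal ^ (1 - l)
      ≤ (μ {ω | l * x + (1 - l) * y ≤ Y ω}).toReal := by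
  have hprob : IsProbabilityMeasure (μ.map Y) := Measure.isProbabilityMeasure_map hmeas.aemeasurable
  have h := tail_lc_Ici (μ.map Y) hlc x y l hl0 hl1
  have hmap : ∀ s : ℝ, μ.map Y (Ici s) = μ {ω | s ≤ Y ω} := fun s => by
    rw [Measure.map_apply hmeas measurableSet_Ici]; rfl
  rw [hmap, hmap, hmap] at h
  calc (μ {ω | x ≤ Y ω}).toReal ^ l * (μ {ω | y ≤ Y ω}).toReal ^ (1 - l)
      = ((μ {ω | x ≤ Y ω}) ^ l * (μ {ω | y ≤ Y ω}) ^ (1 - l)).toReal := by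
        rw [ENNReal.toReal_mul, ENNReal.toReal_rpow, ENNReal.toReal_rpow]
    _ ≤ _ := ENNReal.toReal_mono (measure_ne_top μ _) h

lemma tail_lc_real_neg {Y : Ω → ℝ} (hmeas : Measurable Y) (hlc : IsLogConcave (μ.map Y))
    (x y l : ℝ) (hl0 : 0 ≤ l) (hl1 : l ≤ 1) :
    (μ {ω | x ≤ -Y ω}).toReal ^ l * (μ {ω | y ≤ -Y ω}).toReal ^ (1 - l)
      ≤ (μ {ω | l * x + (1 - l) * y ≤ -Y ω}).toReal := by
  have hprob : IsProbabilityMeasure (μ.map Y) := Measure.isProbabilityMeasure_map hmeas.aemeasurable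
  have h := tail_lc_Iic (μ.map Y) hlc (-x) (-y) l hl0 hl1
  have hmap : ∀ s : ℝ, μ.map Y (Iic (-s)) = μ {ω | s ≤ -Y ω} := fun s => by
    rw [Measure.map_apply hmeas measurableSet_Iic]
    congr 1
    ext ω
    simp only [Set.mem_preimage, Set.mem_Iic, Set.mem_setOf_eq]
    constructor <;> intro h <;> linarith
  have harg : l * (-x) + (1 - l) * (-y) = -(l * x + (1 - l) * y) := by ring
  rw [harg, hmap, hmap, hmap] at h
  calc (μ {ω | x ≤ -Y ω}).toReal ^ l * (μ {ω | y ≤ -Y ω}).toReal ^ (1 - l)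
      = ((μ {ω | x ≤ -Y ω}) ^ l * (μ {ω | y ≤ -Y ω}) ^ (1 - l)).toReal := by
        rw [ENNReal.toReal_mul, ENNReal.toReal_rpow, ENNReal.toReal_rpow]
    _ ≤ _ := ENNReal.toReal_mono (measure_ne_top μ _) h


open Set Filter

variable {Ω : Type*} [MeasurableSpace Ω] (μ : Measure Ω) [IsProbabilityMeasure μ]

lemma grunbaum {Z : Ω → ℝ} (hmeas : Measurable Z) (hint : Integrable Z μ)
    (hmean : ∫ ω, Z ω ∂μ = 0)
    (hconc : ∀ x y l : ℝ, 0 ≤ l → l ≤ 1 →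
      (μ {ω | x ≤ Z ω}).toReal ^ l * (μ {ω | y ≤ Z ω}).toReal ^ (1 - l)
        ≤ (μ {ω | l * x + (1 - l) * y ≤ Z ω}).toReal) :
    Real.exp (-1) ≤ (μ {ω | 0 ≤ Z ω}).toReal := by
  classical
  set G : ℝ → ℝ := fun s => (μ {ω | s ≤ Z ω}).toReal with hGdef
  have hconcG : ∀ x y l : ℝ, 0 ≤ l → l ≤ 1 →
      G x ^ l * G y ^ (1 - l) ≤ G (l * x + (1 - l) * y) := by
    intro x y l h0 h1
    simp only [hGdef]
    exact hconc x y l h0 h1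
  have hGnn : ∀ s, 0 ≤ G s := fun s => ENNReal.toReal_nonneg
  have hGle1 : ∀ s, G s ≤ 1 := by
    intro s
    have h := prob_le_one (μ := μ) (s := {ω | s ≤ Z ω})
    simpa [hGdef] using ENNReal.toReal_mono (by simp) h
  have hGanti : Antitone G := by
    intro u v huv
    exact ENNReal.toReal_mono (measure_ne_top _ _)
      (measure_mono fun ω hω => le_trans huv hω)
  have hGmeas : Measurable G := hGanti.measurable
  have hsetmeas : ∀ s : ℝ, MeasurableSet {ω | s ≤ Z ω} := fun s =>
    measurableSet_le measurable_const hmeas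
  have hcompl : ∀ s : ℝ, (μ {ω | Z ω < s}).toReal = 1 - G s := by
    intro s
    have hset : {ω | Z ω < s} = {ω | s ≤ Z ω}ᶜ := by
      ext ω; simp [not_le]
    rw [hset, prob_compl_eq_one_sub (hsetmeas s),
      ENNReal.toReal_sub_of_le prob_le_one (by simp)]
    simp [hGdef]
  set a : ℝ := G 0 with ha_def
  have hae_neBot : (Filter.NeBot (ae μ)) := ae_neBot.mpr (IsProbabilityMeasure.ne_zero μ)
  have hZzero : (∀ᵐ ω ∂μ, Z ω ≤ 0) → (∀ᵐ ω ∂μ, Z ω = 0) := by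
    intro hle
    have hnn : 0 ≤ᵐ[μ] fun ω => -Z ω := hle.mono fun ω h => by simpa using h
    have hzero : ∫ ω, -Z ω ∂μ = 0 := by rw [integral_neg, hmean, neg_zero]
    have := (integral_eq_zero_iff_of_nonneg_ae hnn hint.neg).mp hzero
    filter_upwards [this] with ω h
    have h2 : -Z ω = 0 := h
    linarith
  -- positivity of a
  have ha_pos : 0 < a := by
    rcases (hGnn 0).lt_or_eq with h | h
    · exact h
    · exfalso
      have hz : μ {ω | 0 ≤ Z ω} = 0 := by
        have := h.symm
        simp only [ha_def, hGdef] at this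
        exact ((ENNReal.toReal_eq_zero_iff _).mp this).resolve_right (measure_ne_top _ _)
      have hlt : ∀ᵐ ω ∂μ, Z ω < 0 := by
        rw [ae_iff]
        simpa [not_lt] using hz
      have heq := hZzero (hlt.mono fun ω h => h.le)
      obtain ⟨ω, h1, h2⟩ := (hlt.and heq).exists
      rw [h2] at h1
      exact lt_irrefl 0 h1
  -- N and P
  set N : Ω → ℝ := fun ω => max (-Z ω) 0 with hNdef
  set Pp : Ω → ℝ := fun ω => max (Z ω) 0 with hPdef
  have hNmeas : Measurable N := hmeas.neg.max measurable_const
  have hNint : Integrable N μ := hint.neg.pos_part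
  have hPint : Integrable Pp μ := hint.pos_part
  have hNnn : ∀ ω, 0 ≤ N ω := fun ω => le_max_right _ _
  have hPnn : ∀ ω, 0 ≤ Pp ω := fun ω => le_max_right _ _
  have hPN : ∫ ω, Pp ω ∂μ = ∫ ω, N ω ∂μ := by
    have hfun : (fun ω => Pp ω - N ω) = Z := by
      funext ω
      rcases le_total 0 (Z ω) with h | h
      · rw [hPdef, hNdef]
        simp only
        rw [max_eq_left h, max_eq_right (neg_nonpos.mpr h)]
        ring
      · rw [hPdef, hNdef]
        simp only
        rw [max_eq_right h, max_eq_left (neg_nonneg.mpr h)]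
        ring
    have h0 : ∫ ω, (Pp ω - N ω) ∂μ = 0 := by rw [hfun]; exact hmean
    rw [integral_sub hPint hNint] at h0
    linarith
  -- integrability helpers
  have hanti_meas : ∀ W : Ω → ℝ,
      Antitone (fun t : ℝ => (μ {ω | t < W ω}).toReal) := by
    intro W t₁ t₂ h
    exact ENNReal.toReal_mono (measure_ne_top _ _)
      (measure_mono fun ω hω => lt_of_le_of_lt h hω)
  have hbd1 : ∀ (W : Ω → ℝ) (x y : ℝ),
      IntegrableOn (fun t => (μ {ω | t < W ω}).toReal) (Ioo x y) volume := by
    intro W x y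
    apply Integrable.mono (g := fun _ : ℝ => (1:ℝ))
      (integrableOn_const (C := (1:ℝ)) measure_Ioo_lt_top.ne)
      ((hanti_meas W).measurable.aestronglyMeasurable)
    refine ae_of_all _ fun s => ?_
    rw [Real.norm_eq_abs, norm_one, abs_of_nonneg ENNReal.toReal_nonneg]
    exact ENNReal.toReal_le_of_le_ofReal one_pos.le (by simpa using prob_le_one)
  have hGneg_int : ∀ x y : ℝ, IntegrableOn (fun s => 1 - G (-s)) (Ioo x y) volume := by
    intro x y
    apply Integrable.mono (g := fun _ : ℝ => (1:ℝ))
      (integrableOn_const (C := (1:ℝ)) measure_Ioo_lt_top.ne)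
      ((measurable_const.sub (hGmeas.comp measurable_neg)).aestronglyMeasurable)
    refine ae_of_all _ fun s => ?_
    rw [Real.norm_eq_abs, norm_one, abs_le]
    simp only [Pi.sub_apply, Function.comp_apply]
    constructor
    · linarith [hGle1 (-s)]
    · linarith [hGnn (-s)]
  -- Key 2: lower bound for E[N]
  have key2 : ∀ R : ℝ, 0 < R →
      ∫ s in Ioo 0 R, (1 - G (-s)) ≤ ∫ ω, N ω ∂μ := by
    intro R hR
    have hminmeas : Measurable fun ω => min (N ω) R := hNmeas.min measurable_const
    have hminint : Integrable (fun ω => min (N ω) R) μ := by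
      apply hNint.mono hminmeas.aestronglyMeasurable
      refine ae_of_all _ fun ω => ?_
      rw [Real.norm_eq_abs, Real.norm_eq_abs, abs_of_nonneg (le_min (hNnn ω) hR.le),
        abs_of_nonneg (hNnn ω)]
      exact min_le_left _ _
    have hminlc := hminint.integral_eq_integral_meas_lt
      (ae_of_all _ fun ω => le_min (hNnn ω) hR.le)
    have hind : (fun t : ℝ => (μ {ω | t < min (N ω) R}).toReal)
        = (Iio R).indicator (fun t => (μ {ω | t < min (N ω) R}).toReal) := by
      funext s
      by_cases hsR : s < R
      · rw [Set.indicator_of_mem (Set.mem_Iio.mpr hsR)]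
      · rw [Set.indicator_of_notMem (by simpa [Set.mem_Iio] using hsR)]
        have : {ω | s < min (N ω) R} = (∅ : Set Ω) := by
          ext ω
          simp only [Set.mem_setOf_eq, Set.mem_empty_iff_false, iff_false, not_lt]
          exact le_trans (min_le_right _ _) (not_lt.mp hsR)
        rw [this]
        simp
    calc ∫ s in Ioo 0 R, (1 - G (-s))
        ≤ ∫ s in Ioo 0 R, (μ {ω | s < min (N ω) R}).toReal := by
          apply setIntegral_mono_on (hGneg_int 0 R) (hbd1 _ 0 R) measurableSet_Ioo
          intro s hs
          have hset : {ω | s < min (N ω) R} = {ω | Z ω < -s} := by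
            ext ω
            simp only [Set.mem_setOf_eq, lt_min_iff]
            constructor
            · rintro ⟨h1, _⟩
              rcases lt_max_iff.mp h1 with h | h
              · linarith
              · linarith [hs.1]
            · intro h
              refine ⟨lt_max_iff.mpr (Or.inl (by linarith)), hs.2⟩
          rw [hset, hcompl]
      _ = ∫ s in Ioi 0, (μ {ω | s < min (N ω) R}).toReal := by
          rw [← Set.Ioi_inter_Iio, ← setIntegral_indicator measurableSet_Iio, ← hind]
      _ = ∫ ω, min (N ω) R ∂μ := hminlc.symm
      _ ≤ ∫ ω, N ω ∂μ := integral_mono hminint hNint fun ω => min_le_left _ _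
  -- slope inequality
  have hslope : ∀ u s : ℝ, 0 < u → 0 < s → 0 < G s →
      (Real.log (G s) - Real.log a) / s ≤ (Real.log a - Real.log (G (-u))) / u := by
    intro u s hu hs hGs
    have hGu : 0 < G (-u) := lt_of_lt_of_le ha_pos (hGanti (by linarith : -u ≤ (0:ℝ)))
    have hsu : 0 < s + u := by linarith
    have hl0 : 0 ≤ s / (s + u) := div_nonneg hs.le hsu.le
    have hl1 : s / (s + u) ≤ 1 := (div_le_one hsu).mpr (by linarith)
    have h := hconcG (-u) s (s / (s + u)) hl0 hl1
    have hcomb : s / (s + u) * (-u) + (1 - s / (s + u)) * s = 0 := by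
      field_simp
      ring
    rw [hcomb] at h
    have hLpos : 0 < G (-u) ^ (s / (s + u)) * G s ^ (1 - s / (s + u)) :=
      mul_pos (Real.rpow_pos_of_pos hGu _) (Real.rpow_pos_of_pos hGs _)
    have hlog := Real.log_le_log hLpos h
    rw [Real.log_mul (Real.rpow_pos_of_pos hGu _).ne' (Real.rpow_pos_of_pos hGs _).ne',
      Real.log_rpow hGu, Real.log_rpow hGs] at hlog
    have h2 : s * Real.log (G (-u)) + u * Real.log (G s) ≤ (s + u) * Real.log a := by
      have h3 := mul_le_mul_of_nonneg_left hlog hsu.le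
      have h4 : (s + u) * (s / (s + u) * Real.log (G (-u))
          + (1 - s / (s + u)) * Real.log (G s))
          = s * Real.log (G (-u)) + u * Real.log (G s) := by
        first
        | (field_simp; ring)
        | field_simp
      rw [h4] at h3
      exact h3
    rw [div_le_div_iff₀ hs hu]
    nlinarith [h2]
  -- main case split
  by_cases hex : ∃ s : ℝ, 0 < s ∧ 0 < G s
  · obtain ⟨s₁, hs₁, hGs₁⟩ := hex
    set S : Set ℝ := {r | ∃ s : ℝ, 0 < s ∧ 0 < G s ∧ r = (Real.log (G s) - Real.log a) / s}
      with hSdef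
    have hSne : S.Nonempty := ⟨_, s₁, hs₁, hGs₁, rfl⟩
    have hSbd : BddAbove S := by
      refine ⟨(Real.log a - Real.log (G (-1))) / 1, ?_⟩
      rintro r ⟨s, hs, hGs, rfl⟩
      exact hslope 1 s one_pos hs hGs
    set d : ℝ := sSup S with hd_def
    have hT : ∀ x : ℝ, G x ≤ a * Real.exp (d * x) := by
      intro x
      rcases lt_trichotomy x 0 with hx | hx | hx
      · have hu : 0 < -x := by linarith
        have hle : d ≤ (Real.log a - Real.log (G (-(-x)))) / (-x) := by
          apply csSup_le hSne
          rintro r ⟨s, hs, hGs, rfl⟩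
          exact hslope (-x) s hu hs hGs
        rw [neg_neg] at hle
        have hGx : 0 < G x := lt_of_lt_of_le ha_pos (hGanti hx.le)
        rw [le_div_iff₀ hu] at hle
        have hmul : d * (-x) = -(d * x) := by ring
        calc G x = Real.exp (Real.log (G x)) := (Real.exp_log hGx).symm
          _ ≤ Real.exp (Real.log a + d * x) := Real.exp_le_exp.mpr (by nlinarith [hle])
          _ = a * Real.exp (d * x) := by rw [Real.exp_add, Real.exp_log ha_pos]
      · rw [hx]
        simp [ha_def]
      · by_cases hGx : 0 < G x
        · have hmem : (Real.log (G x) - Real.log a) / x ∈ S := ⟨x, hx, hGx, rfl⟩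
          have hle := le_csSup hSbd hmem
          rw [div_le_iff₀ hx] at hle
          calc G x = Real.exp (Real.log (G x)) := (Real.exp_log hGx).symm
            _ ≤ Real.exp (Real.log a + d * x) := Real.exp_le_exp.mpr (by nlinarith [hle])
            _ = a * Real.exp (d * x) := by rw [Real.exp_add, Real.exp_log ha_pos]
        · have h0 : G x = 0 := le_antisymm (not_lt.mp hGx) (hGnn x)
          rw [h0]
          positivity
    rcases lt_or_ge d 0 with hd | hd
    · -- d < 0
      by_cases ha1 : 1 ≤ a
      · exact le_trans (by rw [Real.exp_le_one_iff]; norm_num) ha1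
      push_neg at ha1
      set c : ℝ := -d with hc_def
      have hcpos : 0 < c := by rw [hc_def]; linarith
      have hloga_neg : Real.log a < 0 := Real.log_neg ha_pos ha1
      set u₀ : ℝ := -Real.log a / c with hu₀def
      have hu₀ : 0 < u₀ := div_pos (by linarith) hcpos
      -- upper bound for E[P]
      have hPlc := hPint.integral_eq_integral_meas_lt
        (ae_of_all _ fun ω => le_max_right _ _)
      have hdom : IntegrableOn (fun t : ℝ => a * Real.exp (d * t)) (Ioi 0) volume := by
        have h1 : IntegrableOn (fun t : ℝ => Real.exp (-c * t)) (Ioi 0) volume :=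
          exp_neg_integrableOn_Ioi 0 hcpos
        have h2 : (fun t : ℝ => a * Real.exp (d * t))
            = (fun t : ℝ => a * Real.exp (-c * t)) := by
          funext t
          rw [hc_def]
          ring_nf
        rw [h2]
        exact h1.const_mul a
      have hEP : ∫ ω, Pp ω ∂μ ≤ a / c := by
        rw [hPlc]
        have hptle : ∀ t ∈ Ioi (0:ℝ),
            (μ {ω | t < Pp ω}).toReal ≤ a * Real.exp (d * t) := by
          intro t ht
          have hsub : {ω | t < Pp ω} ⊆ {ω | t ≤ Z ω} := by
            intro ω hω
            have h1 : t < max (Z ω) 0 := hω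
            rcases lt_max_iff.mp h1 with h | h
            · exact h.le
            · exact absurd (mem_Ioi.mp ht) (by simp [not_lt]; linarith)
          exact le_trans (ENNReal.toReal_mono (measure_ne_top _ _) (measure_mono hsub))
            (hT t)
        have hintP : IntegrableOn (fun t : ℝ => (μ {ω | t < Pp ω}).toReal) (Ioi 0)
            volume := by
          apply Integrable.mono hdom ((hanti_meas Pp).measurable.aestronglyMeasurable)
          rw [ae_restrict_iff' measurableSet_Ioi]
          refine ae_of_all _ fun t ht => ?_
          rw [Real.norm_eq_abs, Real.norm_eq_abs, abs_of_nonneg ENNReal.toReal_nonneg,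
            abs_of_nonneg (by positivity)]
          exact hptle t ht
        calc ∫ t in Ioi 0, (μ {ω | t < Pp ω}).toReal
            ≤ ∫ t in Ioi 0, a * Real.exp (d * t) :=
              setIntegral_mono_on hintP hdom measurableSet_Ioi hptle
          _ = a / c := by
              have h2 : (fun t : ℝ => a * Real.exp (d * t))
                  = (fun t : ℝ => a * Real.exp (-(c * t))) := by
                funext t
                rw [hc_def]
                ring_nf
              rw [h2]
              rw [MeasureTheory.integral_const_mul]
              have h3 := integral_comp_mul_left_Ioi (fun x => Real.exp (-x)) 0 hcpos
              simp only [mul_zero] at h3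
              rw [h3, integral_exp_neg_Ioi]
              simp only [neg_zero, Real.exp_zero, smul_eq_mul, mul_one]
              rw [div_eq_mul_inv, mul_comm]
      -- lower bound for E[N]
      have hEN : u₀ - (1 - a) / c ≤ ∫ ω, N ω ∂μ := by
        refine le_trans ?_ (key2 u₀ hu₀)
        have hpt : ∀ s ∈ Ioo (0:ℝ) u₀, 1 - a * Real.exp (c * s) ≤ 1 - G (-s) := by
          intro s hs
          have h1 := hT (-s)
          have h2 : d * (-s) = c * s := by rw [hc_def]; ring
          rw [h2] at h1
          linarith
        have hexpc : Continuous fun s : ℝ => Real.exp (c * s) :=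
          Real.continuous_exp.comp (continuous_const.mul continuous_id)
        have hcont : Continuous fun s : ℝ => 1 - a * Real.exp (c * s) :=
          continuous_const.sub (continuous_const.mul hexpc)
        have hint3 : IntegrableOn (fun s : ℝ => 1 - a * Real.exp (c * s)) (Ioo 0 u₀)
            volume :=
          (hcont.integrableOn_Icc).mono_set Set.Ioo_subset_Icc_self
        have hval : ∫ s in Ioo 0 u₀, (1 - a * Real.exp (c * s)) = u₀ - (1 - a) / c := by
          rw [← integral_Ioc_eq_integral_Ioo, ← intervalIntegral.integral_of_le hu₀.le]
          have hi1 : IntervalIntegrable (fun _ : ℝ => (1:ℝ)) volume 0 u₀ :=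
            intervalIntegrable_const
          have hi2 : IntervalIntegrable (fun s : ℝ => a * Real.exp (c * s)) volume 0 u₀ :=
            ((continuous_const.mul hexpc).intervalIntegrable) _ _
          rw [intervalIntegral.integral_sub hi1 hi2]
          rw [intervalIntegral.integral_const]
          rw [intervalIntegral.integral_const_mul]
          have hderiv : ∀ s ∈ Set.uIcc (0:ℝ) u₀,
              HasDerivAt (fun x : ℝ => Real.exp (c * x) / c) (Real.exp (c * s)) s := by
            intro s _
            have h := ((Real.hasDerivAt_exp (c * s)).comp s
              ((hasDerivAt_id s).const_mul c))
            have h2 := h.div_const c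
            simpa [mul_comm, mul_div_assoc, mul_div_cancel_left₀ _ hcpos.ne'] using h2
          rw [intervalIntegral.integral_eq_sub_of_hasDerivAt hderiv
            (hexpc.intervalIntegrable _ _)]
          have hcu : c * u₀ = -Real.log a := by
            rw [hu₀def]
            first
            | (field_simp; ring)
            | field_simp
          rw [hcu]
          rw [Real.exp_neg, Real.exp_log ha_pos]
          simp only [mul_zero, Real.exp_zero, smul_eq_mul]
          field_simp
          ring
        rw [← hval]
        exact setIntegral_mono_on hint3 (hGneg_int 0 u₀) measurableSet_Ioo hpt
      -- combine
      have hchain : u₀ - (1 - a) / c ≤ a / c := by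
        calc u₀ - (1 - a) / c ≤ ∫ ω, N ω ∂μ := hEN
          _ = ∫ ω, Pp ω ∂μ := hPN.symm
          _ ≤ a / c := hEP
      have hloga : -1 ≤ Real.log a := by
        have h9 := mul_le_mul_of_nonneg_right hchain hcpos.le
        have e1 : (u₀ - (1 - a) / c) * c = -Real.log a - (1 - a) := by
          rw [hu₀def]
          first
          | (field_simp; ring)
          | field_simp
        have e2 : a / c * c = a := div_mul_cancel₀ _ hcpos.ne'
        rw [e1, e2] at h9
        linarith
      calc Real.exp (-1) ≤ Real.exp (Real.log a) := Real.exp_le_exp.mpr hloga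
        _ = a := Real.exp_log ha_pos
    · -- 0 ≤ d
      by_cases ha1 : 1 ≤ a
      · exact le_trans (by rw [Real.exp_le_one_iff]; norm_num) ha1
      push_neg at ha1
      exfalso
      have hENnn : 0 ≤ ∫ ω, N ω ∂μ := integral_nonneg fun ω => hNnn ω
      set R : ℝ := (∫ ω, N ω ∂μ + 1) / (1 - a) with hRdef
      have hRpos : 0 < R := div_pos (by linarith) (by linarith)
      have hk := key2 R hRpos
      have hpt : ∀ s ∈ Ioo (0:ℝ) R, (1 - a : ℝ) ≤ 1 - G (-s) := by
        intro s hs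
        have h1 := hT (-s)
        have h2 : Real.exp (d * -s) ≤ 1 := by
          rw [Real.exp_le_one_iff]
          have : 0 ≤ s := hs.1.le
          nlinarith
        nlinarith [ha_pos]
      have hlow : (1 - a) * R ≤ ∫ s in Ioo 0 R, (1 - G (-s)) := by
        have h := setIntegral_mono_on
          (integrableOn_const (C := (1 - a : ℝ)) measure_Ioo_lt_top.ne)
          (hGneg_int 0 R) measurableSet_Ioo hpt
        rwa [setIntegral_const, measureReal_def, Real.volume_Ioo, sub_zero,
          ENNReal.toReal_ofReal hRpos.le, smul_eq_mul, mul_comm R (1 - a)] at h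
      rw [hRdef] at hlow
      rw [mul_div_cancel₀ _ (by linarith : (1:ℝ) - a ≠ 0)] at hlow
      linarith
  · -- no positive mass to the right: Z = 0 a.e.
    push_neg at hex
    have hzero : ∀ s : ℝ, 0 < s → μ {ω | s ≤ Z ω} = 0 := by
      intro s hs
      have h1 := hex s hs
      have h2 : G s = 0 := le_antisymm h1 (hGnn s)
      simp only [hGdef] at h2
      exact ((ENNReal.toReal_eq_zero_iff _).mp h2).resolve_right (measure_ne_top _ _)
    have hle : ∀ᵐ ω ∂μ, Z ω ≤ 0 := by
      rw [ae_iff]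
      have hU : {ω | ¬Z ω ≤ 0} = ⋃ n : ℕ, {ω | (1:ℝ)/(n+1) ≤ Z ω} := by
        ext ω
        simp only [Set.mem_setOf_eq, not_le, Set.mem_iUnion]
        constructor
        · intro h
          obtain ⟨n, hn⟩ := exists_nat_one_div_lt h
          exact ⟨n, hn.le⟩
        · rintro ⟨n, hn⟩
          have : (0:ℝ) < 1/(n+1) := by positivity
          linarith
      rw [hU]
      exact measure_iUnion_null fun n => hzero _ (by positivity)
    have heq := hZzero hle
    have h1 : ∀ᵐ ω ∂μ, 0 ≤ Z ω := heq.mono fun ω h => h.ge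
    have h2 : μ {ω | 0 ≤ Z ω} = 1 := by
      rw [← prob_compl_eq_zero_iff (hsetmeas 0)]
      have : {ω | 0 ≤ Z ω}ᶜ = {ω | ¬ (0 ≤ Z ω)} := rfl
      rw [this, ← ae_iff]
      exact h1
    have : (μ {ω | 0 ≤ Z ω}).toReal = 1 := by rw [h2]; simp
    rw [this]
    rw [Real.exp_le_one_iff]
    norm_num

end Helpers

theorem stmt_8 {Ω : Type*} [MeasurableSpace Ω] (μ : Measure Ω) [IsProbabilityMeasure μ]
    (Y : Ω → ℝ) (hmeas : Measurable Y) (hint : Integrable Y μ)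
    (hmean : ∫ ω, Y ω ∂μ = 0) (hlc : IsLogConcave (μ.map Y))
    (t p : ℝ) (ht : 0 < t) (hp : 0 < p)
    (h : (μ {ω | t ≤ |Y ω|}).toReal ≤ p) :
    (1 / Real.sqrt (Real.exp 1 * p)) * (μ {ω | t ≤ |Y ω|}).toReal ≤
      (μ {ω | t / 2 ≤ |Y ω|}).toReal := by
  have hmeasneg : Measurable fun ω => -Y ω := hmeas.neg
  have hintneg : Integrable (fun ω => -Y ω) μ := hint.neg
  have hmeanneg : ∫ ω, -Y ω ∂μ = 0 := by rw [integral_neg, hmean, neg_zero]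
  have hconcY := tail_lc_real μ hmeas hlc
  have hconcZ := tail_lc_real_neg μ hmeas hlc
  have hg1 : Real.exp (-1) ≤ (μ {ω | 0 ≤ Y ω}).toReal :=
    grunbaum μ hmeas hint hmean hconcY
  have hg2 : Real.exp (-1) ≤ (μ {ω | 0 ≤ -Y ω}).toReal :=
    grunbaum μ hmeasneg hintneg hmeanneg hconcZ
  have hsplit : ∀ r : ℝ, 0 < r → (μ {ω | r ≤ |Y ω|}).toReal
      = (μ {ω | r ≤ Y ω}).toReal + (μ {ω | r ≤ -Y ω}).toReal := by
    intro r hr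
    have hsets : {ω | r ≤ |Y ω|} = {ω | r ≤ Y ω} ∪ {ω | r ≤ -Y ω} := by
      ext ω
      simp only [Set.mem_setOf_eq, Set.mem_union, le_abs]
    have hdisj : Disjoint {ω | r ≤ Y ω} {ω | r ≤ -Y ω} := by
      rw [Set.disjoint_left]
      intro ω h1 h2
      simp only [Set.mem_setOf_eq] at h1 h2
      have : ¬ (r ≤ -Y ω) := by linarith
      exact this h2
    rw [hsets, measure_union hdisj (measurableSet_le measurable_const hmeas.neg),
      ENNReal.toReal_add (measure_ne_top _ _) (measure_ne_top _ _)]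
  have hhalf : ∀ (W : Ω → ℝ),
      (∀ x y l : ℝ, 0 ≤ l → l ≤ 1 →
        (μ {ω | x ≤ W ω}).toReal ^ l * (μ {ω | y ≤ W ω}).toReal ^ (1 - l)
          ≤ (μ {ω | l * x + (1 - l) * y ≤ W ω}).toReal) →
      Real.exp (-1) ≤ (μ {ω | 0 ≤ W ω}).toReal →
      Real.sqrt ((μ {ω | t ≤ W ω}).toReal) * Real.sqrt (Real.exp (-1))
        ≤ (μ {ω | t / 2 ≤ W ω}).toReal := by
    intro W hconc hg
    have h1 := hconc t 0 (1/2) (by norm_num) (by norm_num)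
    have h2 : (1:ℝ)/2 * t + (1 - 1/2) * 0 = t / 2 := by ring
    rw [h2] at h1
    have h3 : (1:ℝ) - 1/2 = 1/2 := by norm_num
    rw [h3] at h1
    have h4 : Real.sqrt ((μ {ω | t ≤ W ω}).toReal) * Real.sqrt (Real.exp (-1))
        ≤ (μ {ω | t ≤ W ω}).toReal ^ ((1:ℝ)/2) * (μ {ω | 0 ≤ W ω}).toReal ^ ((1:ℝ)/2) := by
      rw [Real.sqrt_eq_rpow, Real.sqrt_eq_rpow]
      apply mul_le_mul_of_nonneg_left
      · exact Real.rpow_le_rpow (Real.exp_nonneg _) hg (by norm_num)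
      · positivity
    exact h4.trans h1
  have hA := hhalf Y hconcY hg1
  have hB := hhalf (fun ω => -Y ω) hconcZ hg2
  set A := (μ {ω | t ≤ Y ω}).toReal with hAdef
  set B := (μ {ω | t ≤ -Y ω}).toReal with hBdef
  set A2 := (μ {ω | t / 2 ≤ Y ω}).toReal with hA2def
  set B2 := (μ {ω | t / 2 ≤ -Y ω}).toReal with hB2def
  have hAnn : 0 ≤ A := ENNReal.toReal_nonneg
  have hBnn : 0 ≤ B := ENNReal.toReal_nonneg
  rw [hsplit t ht, hsplit (t/2) (by linarith)]
  have hE : (0:ℝ) < Real.exp 1 := Real.exp_pos 1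
  have hsE : 0 < Real.sqrt (Real.exp 1) := Real.sqrt_pos.mpr hE
  have hsp : 0 < Real.sqrt p := Real.sqrt_pos.mpr hp
  have hq : A + B ≤ p := by rw [hAdef, hBdef, ← hsplit t ht]; exact h
  have hqnn : 0 ≤ A + B := by linarith
  have hsqrtE : Real.sqrt (Real.exp (-1)) = (Real.sqrt (Real.exp 1))⁻¹ := by
    rw [Real.exp_neg, Real.sqrt_inv]
  have hstep1 : Real.sqrt (A + B) ≤ Real.sqrt A + Real.sqrt B := by
    have hsq : A + B ≤ (Real.sqrt A + Real.sqrt B) ^ 2 := by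
      nlinarith [Real.sq_sqrt hAnn, Real.sq_sqrt hBnn, Real.sqrt_nonneg A,
        Real.sqrt_nonneg B, mul_nonneg (Real.sqrt_nonneg A) (Real.sqrt_nonneg B)]
    calc Real.sqrt (A + B) ≤ Real.sqrt ((Real.sqrt A + Real.sqrt B) ^ 2) :=
          Real.sqrt_le_sqrt hsq
      _ = Real.sqrt A + Real.sqrt B := by
          rw [Real.sqrt_sq (by positivity)]
  have hstep2 : (A + B) / Real.sqrt p ≤ Real.sqrt (A + B) := by
    rw [div_le_iff₀ hsp]
    calc A + B = Real.sqrt (A + B) * Real.sqrt (A + B) := (Real.mul_self_sqrt hqnn).symm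
      _ ≤ Real.sqrt (A + B) * Real.sqrt p :=
          mul_le_mul_of_nonneg_left (Real.sqrt_le_sqrt hq) (Real.sqrt_nonneg _)
  calc (1 / Real.sqrt (Real.exp 1 * p)) * (A + B)
      = ((A + B) / Real.sqrt p) * (Real.sqrt (Real.exp 1))⁻¹ := by
        rw [Real.sqrt_mul hE.le, one_div, mul_inv, div_eq_mul_inv]
        ring
    _ ≤ Real.sqrt (A + B) * (Real.sqrt (Real.exp 1))⁻¹ :=
        mul_le_mul_of_nonneg_right hstep2 (by positivity)
    _ ≤ (Real.sqrt A + Real.sqrt B) * (Real.sqrt (Real.exp 1))⁻¹ :=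
        mul_le_mul_of_nonneg_right hstep1 (by positivity)
    _ = Real.sqrt A * Real.sqrt (Real.exp (-1)) + Real.sqrt B * Real.sqrt (Real.exp (-1)) := by
        rw [hsqrtE]
        ring
    _ ≤ A2 + B2 := add_le_add hA hB
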